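/- Suppose there exists a reconfiguration sequence ρ of length 2m(n+2) from p_b to p_e in G_φ. Then for every level i ∈ {1, …, n}, some path in ρ contains a gadget vertex of level i, and all gadget vertices of level i contained in paths of ρ have the same v-state. -/

import Mathlib

/-- Vertices of the graph `G_φ` (for a CNF formula with `n` variables and `m` clauses):
`s`, `t`, the vertices `beg_{j+1}` and `end_{j+1}` (for `j : Fin (2m)`), and the gadget
vertices `v(i+1, vs, cs, j+1)` (for `i : Fin n`, `vs cs : Bool`, `j : Fin (2m)`).
An index `i : Fin n` encodes level `i+1`, and `j : Fin (2m)` encodes depth `j+1`. -/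
inductive PVert (n m : ℕ) : Type where
  | s : PVert n m
  | t : PVert n m
  | beg (j : Fin (2 * m)) : PVert n m
  | en (j : Fin (2 * m)) : PVert n m
  | v (i : Fin n) (vs : Bool) (cs : Bool) (j : Fin (2 * m)) : PVert n m
deriving DecidableEq

/-- The depth of a vertex of `G_φ`. -/
def PVert.depth {n m : ℕ} : PVert n m → ℕ
  | PVert.s => 0
  | PVert.t => 2 * m + 1
  | PVert.beg j => (j : ℕ) + 1
  | PVert.en j => (j : ℕ) + 1
  | PVert.v _ _ _ j => (j : ℕ) + 1

/-- The level of a vertex of `G_φ` (`beg`-vertices have level `0`, `end`-vertices have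
level `n+1`, the gadget vertex `v(i,vs,cs,j)` has level `i`; junk value `0` for `s`,`t`). -/
def PVert.level {n m : ℕ} : PVert n m → ℕ
  | PVert.beg _ => 0
  | PVert.en _ => n + 1
  | PVert.v i _ _ _ => (i : ℕ) + 1
  | _ => 0

/-- The c-state of a vertex of `G_φ` (`beg`-vertices have c-state `0`, `end`-vertices have
c-state `1`, the gadget vertex `v(i,vs,cs,j)` has c-state `cs`; junk value `0` for `s`,`t`). -/
def PVert.cstate {n m : ℕ} : PVert n m → ℕ
  | PVert.beg _ => 0
  | PVert.en _ => 1
  | PVert.v _ _ cs _ => cond cs 1 0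
  | _ => 0

/-- The (directed) edges of `G_φ`.  The CNF formula `φ` is recorded by its clauses:
`(i, vs) ∈ φ jc` means that clause `C_{jc+1}` contains the literal asserting `x_{i+1} = vs`,
i.e. that setting `x_{i+1} = vs` satisfies clause `C_{jc+1}`. -/
def PEdge (n m : ℕ) (φ : Fin m → Finset (Fin n × Bool)) (a b : PVert n m) : Prop :=
  -- (a) gadget edges, same c-state: from depth j to depth j+1 inside a gadget
  (∃ (i : Fin n) (vs cs : Bool) (j j' : Fin (2 * m)), (j' : ℕ) = (j : ℕ) + 1 ∧
      a = PVert.v i vs cs j ∧ b = PVert.v i vs cs j') ∨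
  -- (a) gadget edges, crossing: from even depth 2j to odd depth 2j+1, flipping the c-state
  (∃ (i : Fin n) (vs cs : Bool) (j j' : Fin (2 * m)), (j' : ℕ) = (j : ℕ) + 1 ∧
      (j : ℕ) % 2 = 1 ∧ a = PVert.v i vs cs j ∧ b = PVert.v i vs (!cs) j') ∨
  -- (b) formula edges: from v(i,vs,1,2jc-1) to v(i,vs,0,2jc) when x_i = vs satisfies C_jc
  (∃ (i : Fin n) (vs : Bool) (j j' : Fin (2 * m)) (jc : Fin m), (j' : ℕ) = (j : ℕ) + 1 ∧
      (j : ℕ) = 2 * (jc : ℕ) ∧ (i, vs) ∈ φ jc ∧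
      a = PVert.v i vs true j ∧ b = PVert.v i vs false j') ∨
  -- (c) inter-level edges, same c-state: from level i+1, depth j-1 to level i, depth j
  (∃ (ihi ilo : Fin n) (vs' vs cs : Bool) (j j' : Fin (2 * m)), (ihi : ℕ) = (ilo : ℕ) + 1 ∧
      (j' : ℕ) = (j : ℕ) + 1 ∧ a = PVert.v ihi vs' cs j ∧ b = PVert.v ilo vs cs j') ∨
  -- (c) inter-level edges, crossing: from level i+1, even depth 2j to level i, depth 2j+1
  (∃ (ihi ilo : Fin n) (vs' vs cs : Bool) (j j' : Fin (2 * m)), (ihi : ℕ) = (ilo : ℕ) + 1 ∧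
      (j' : ℕ) = (j : ℕ) + 1 ∧ (j : ℕ) % 2 = 1 ∧
      a = PVert.v ihi vs' cs j ∧ b = PVert.v ilo vs (!cs) j') ∨
  -- (d) the begin path
  (∃ (j j' : Fin (2 * m)), (j' : ℕ) = (j : ℕ) + 1 ∧ a = PVert.beg j ∧ b = PVert.beg j') ∨
  -- (d) the end path
  (∃ (j j' : Fin (2 * m)), (j' : ℕ) = (j : ℕ) + 1 ∧ a = PVert.en j ∧ b = PVert.en j') ∨
  -- (d) from v(1,vs,0,j) to beg_{j+1}
  (∃ (i : Fin n) (vs : Bool) (j j' : Fin (2 * m)), (i : ℕ) = 0 ∧ (j' : ℕ) = (j : ℕ) + 1 ∧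
      a = PVert.v i vs false j ∧ b = PVert.beg j') ∨
  -- (d) from end_j to v(n,vs,1,j+1)
  (∃ (i : Fin n) (vs : Bool) (j j' : Fin (2 * m)), (i : ℕ) + 1 = n ∧ (j' : ℕ) = (j : ℕ) + 1 ∧
      a = PVert.en j ∧ b = PVert.v i vs true j') ∨
  -- edges from s to every vertex of depth 1
  (a = PVert.s ∧ b.depth = 1) ∨
  -- edges from every vertex of depth 2m to t
  (a.depth = 2 * m ∧ b = PVert.t)

/-- A shortest `(s,t)`-path in `G_φ`: a directed path from `s` to `t` with `2m+2` vertices,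
one vertex of each depth `0, 1, …, 2m+1`. -/
def IsStPath (n m : ℕ) (φ : Fin m → Finset (Fin n × Bool))
    (p : Fin (2 * m + 1 + 1) → PVert n m) : Prop :=
  p 0 = PVert.s ∧ p (Fin.last (2 * m + 1)) = PVert.t ∧
    (∀ i : Fin (2 * m + 1), PEdge n m φ (p i.castSucc) (p i.succ)) ∧
    (∀ d : Fin (2 * m + 1 + 1), (p d).depth = (d : ℕ))

/-- Two vertex sequences differ in exactly one position. -/
def DiffOne {N : ℕ} {α : Type*} (p q : Fin N → α) : Prop :=
  ∃ i, p i ≠ q i ∧ ∀ j, j ≠ i → p j = q j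

/-- `ρ 0, ρ 1, …, ρ ℓ` is a reconfiguration sequence of length `ℓ` from the shortest
`(s,t)`-path `p` to the shortest `(s,t)`-path `q` in `G_φ`. -/
def PReconfSeq (n m : ℕ) (φ : Fin m → Finset (Fin n × Bool))
    (ρ : ℕ → (Fin (2 * m + 1 + 1) → PVert n m)) (ℓ : ℕ)
    (p q : Fin (2 * m + 1 + 1) → PVert n m) : Prop :=
  ρ 0 = p ∧ ρ ℓ = q ∧ (∀ i ≤ ℓ, IsStPath n m φ (ρ i)) ∧
    ∀ i < ℓ, DiffOne (ρ i) (ρ (i + 1))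

/-- The path `p_b = (s, beg_1, …, beg_{2m}, t)`. -/
def pbP (n m : ℕ) : Fin (2 * m + 1 + 1) → PVert n m := fun d =>
  if h0 : (d : ℕ) = 0 then PVert.s
  else if h1 : (d : ℕ) ≤ 2 * m then PVert.beg ⟨(d : ℕ) - 1, by omega⟩
  else PVert.t

/-- The path `p_e = (s, end_1, …, end_{2m}, t)`. -/
def peP (n m : ℕ) : Fin (2 * m + 1 + 1) → PVert n m := fun d =>
  if h0 : (d : ℕ) = 0 then PVert.s
  else if h1 : (d : ℕ) ≤ 2 * m then PVert.en ⟨(d : ℕ) - 1, by omega⟩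
  else PVert.t

section Stmt5Aux

variable {n m : ℕ} {φ : Fin m → Finset (Fin n × Bool)}

lemma cstate_le_one (u : PVert n m) : u.cstate ≤ 1 := by
  cases u <;> simp only [PVert.cstate] <;> try omega
  rename_i cs _; cases cs <;> simp

lemma edge_level {a b : PVert n m} (h : PEdge n m φ a b)
    (ha : a ≠ PVert.s) (hb : b ≠ PVert.t) :
    b.level = a.level ∨ b.level + 1 = a.level := by
  rcases h with ⟨i, vs, cs, j, j', h1, rfl, rfl⟩ | ⟨i, vs, cs, j, j', h1, h2, rfl, rfl⟩ |
    ⟨i, vs, j, j', jc, h1, h2, h3, rfl, rfl⟩ | ⟨ihi, ilo, vs', vs, cs, j, j', h1, h2, rfl, rfl⟩ |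
    ⟨ihi, ilo, vs', vs, cs, j, j', h1, h2, h3, rfl, rfl⟩ | ⟨j, j', h1, rfl, rfl⟩ |
    ⟨j, j', h1, rfl, rfl⟩ | ⟨i, vs, j, j', h1, h2, rfl, rfl⟩ | ⟨i, vs, j, j', h1, h2, rfl, rfl⟩ |
    ⟨rfl, h2⟩ | ⟨h1, rfl⟩ <;> simp [PVert.level] at * <;> omega

lemma edge_same_level_vs {i i' : Fin n} {vs vs' cs cs' : Bool} {j j' : Fin (2 * m)}
    (h : PEdge n m φ (PVert.v i vs cs j) (PVert.v i' vs' cs' j'))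
    (hii : (i : ℕ) = (i' : ℕ)) : vs = vs' := by
  rcases h with ⟨i₁, vs₁, cs₁, j₁, j₁', h1, ha, hb⟩ | ⟨i₁, vs₁, cs₁, j₁, j₁', h1, h2, ha, hb⟩ |
    ⟨i₁, vs₁, j₁, j₁', jc, h1, h2, h3, ha, hb⟩ |
    ⟨ihi, ilo, vs₀, vs₁, cs₁, j₁, j₁', h1, h2, ha, hb⟩ |
    ⟨ihi, ilo, vs₀, vs₁, cs₁, j₁, j₁', h1, h2, h3, ha, hb⟩ | ⟨j₁, j₁', h1, ha, hb⟩ |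
    ⟨j₁, j₁', h1, ha, hb⟩ | ⟨i₁, vs₁, j₁, j₁', h1, h2, ha, hb⟩ |
    ⟨i₁, vs₁, j₁, j₁', h1, h2, ha, hb⟩ | ⟨ha, hb⟩ | ⟨h1, hb⟩ <;>
    simp_all [PVert.depth] <;> omega


lemma edge_vv_vs {a b : PVert n m} {i i' : Fin n} {vs vs' cs cs' : Bool} {j j' : Fin (2 * m)}
    (h : PEdge n m φ a b) (ha : a = PVert.v i vs cs j) (hb : b = PVert.v i' vs' cs' j')
    (hii : (i : ℕ) = (i' : ℕ)) : vs = vs' := by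
  subst ha; subst hb; exact edge_same_level_vs h hii

lemma edge_odd_cs {a b : PVert n m} (h : PEdge n m φ a b)
    (hodd : a.depth % 2 = 1) (ha : a ≠ PVert.s) (hb : b ≠ PVert.t) :
    (a.level = b.level → b.cstate ≤ a.cstate) ∧
    (a.level = b.level + 1 → b.cstate = a.cstate) := by
  constructor <;> intro hlev <;>
  (rcases h with ⟨i, vs, cs, j, j', h1, rfl, rfl⟩ | ⟨i, vs, cs, j, j', h1, h2, rfl, rfl⟩ |
    ⟨i, vs, j, j', jc, h1, h2, h3, rfl, rfl⟩ | ⟨ihi, ilo, vs', vs, cs, j, j', h1, h2, rfl, rfl⟩ |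
    ⟨ihi, ilo, vs', vs, cs, j, j', h1, h2, h3, rfl, rfl⟩ | ⟨j, j', h1, rfl, rfl⟩ |
    ⟨j, j', h1, rfl, rfl⟩ | ⟨i, vs, j, j', h1, h2, rfl, rfl⟩ | ⟨i, vs, j, j', h1, h2, rfl, rfl⟩ |
    ⟨rfl, h2⟩ | ⟨h1, rfl⟩ <;>
    simp [PVert.level, PVert.cstate, PVert.depth] at * <;> omega)

lemma path_depth {p : Fin (2*m+1+1) → PVert n m} (hp : IsStPath n m φ p)
    (d : Fin (2*m+1+1)) : (p d).depth = (d : ℕ) := hp.2.2.2 d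

lemma path_ne_s {p : Fin (2*m+1+1) → PVert n m} (hp : IsStPath n m φ p)
    {d : Fin (2*m+1+1)} (h1 : 1 ≤ (d : ℕ)) : p d ≠ PVert.s := by
  intro h
  have hd := hp.2.2.2 d
  rw [h] at hd; simp [PVert.depth] at hd; omega

lemma path_ne_t {p : Fin (2*m+1+1) → PVert n m} (hp : IsStPath n m φ p)
    {d : Fin (2*m+1+1)} (h2 : (d : ℕ) ≤ 2*m) : p d ≠ PVert.t := by
  intro h
  have hd := hp.2.2.2 d
  rw [h] at hd; simp [PVert.depth] at hd; omega

lemma path_edge {p : Fin (2*m+1+1) → PVert n m} (hp : IsStPath n m φ p)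
    (a b : Fin (2*m+1+1)) (hab : (b : ℕ) = (a : ℕ) + 1) :
    PEdge n m φ (p a) (p b) := by
  have hlt : (a : ℕ) < 2*m+1 := by omega
  have h := hp.2.2.1 ⟨(a : ℕ), hlt⟩
  have h1 : Fin.castSucc ⟨(a : ℕ), hlt⟩ = a := Fin.ext (by simp)
  have h2 : Fin.succ ⟨(a : ℕ), hlt⟩ = b := Fin.ext (by simp [hab])
  rw [h1, h2] at h
  exact h

lemma isV_of_level {p : Fin (2*m+1+1) → PVert n m} (hp : IsStPath n m φ p)
    {d : Fin (2*m+1+1)} (h1 : 1 ≤ (d : ℕ)) (h2 : (d : ℕ) ≤ 2*m)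
    (hl1 : 1 ≤ (p d).level) (hl2 : (p d).level ≤ n) :
    ∃ i vs cs j, p d = PVert.v i vs cs j ∧ ((i : ℕ) + 1 = (p d).level) ∧ ((j : ℕ) + 1 = (d : ℕ)) := by
  have hd := hp.2.2.2 d
  rcases h : p d with _ | _ | j | j | ⟨i, vs, cs, j⟩ <;>
    rw [h] at hd hl1 hl2 <;> simp [PVert.depth, PVert.level] at hd hl1 hl2 <;> try omega
  exact ⟨i, vs, cs, j, rfl, rfl, hd⟩

end Stmt5Aux
section Stmt5Aux2

variable {n m : ℕ} {φ : Fin m → Finset (Fin n × Bool)}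

/-- The per-vertex potential: level plus c-state. -/
def thv {n m : ℕ} (u : PVert n m) : ℕ := u.level + u.cstate

lemma step_main {p q : Fin (2*m+1+1) → PVert n m}
    (hp : IsStPath n m φ p) (hq : IsStPath n m φ q)
    (d : Fin (2*m+1+1)) (hd1 : 1 ≤ (d : ℕ)) (hd2 : (d : ℕ) ≤ 2*m)
    (hag : ∀ e, e ≠ d → p e = q e) :
    thv (q d) ≤ thv (p d) + 1 ∧
    (thv (q d) = thv (p d) + 1 →
      ((q d).level = (p d).level + 1 ∧
        (∀ (i : Fin n) (vs cs : Bool) (j : Fin (2*m)), q d = PVert.v i vs cs j → 2 ≤ (d : ℕ) →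
          ∃ (cs₂ : Bool) (j₂ : Fin (2*m)),
            p ⟨(d : ℕ) - 1, by omega⟩ = PVert.v i vs cs₂ j₂)) ∨
      ((q d).level = (p d).level ∧
        (∀ (i : Fin n) (vs cs : Bool) (j : Fin (2*m)), p d = PVert.v i vs cs j →
          q d = PVert.v i vs true j))) := by
  have hu_ne_s : p d ≠ PVert.s := path_ne_s hp hd1
  have hw_ne_s : q d ≠ PVert.s := path_ne_s hq hd1
  have hu_ne_t : p d ≠ PVert.t := path_ne_t hp hd2
  have hw_ne_t : q d ≠ PVert.t := path_ne_t hq hd2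
  have hcsu := cstate_le_one (p d)
  have hcsw := cstate_le_one (q d)
  have hdepth_u : (p d).depth = (d : ℕ) := path_depth hp d
  have hdepth_w : (q d).depth = (d : ℕ) := path_depth hq d
  -- the inheritance property, proved once for both parities
  have inh : (q d).level = (p d).level + 1 →
      ∀ (i : Fin n) (vs cs : Bool) (j : Fin (2*m)), q d = PVert.v i vs cs j → 2 ≤ (d : ℕ) →
        ∃ (cs₂ : Bool) (j₂ : Fin (2*m)),
          p ⟨(d : ℕ) - 1, by omega⟩ = PVert.v i vs cs₂ j₂ := by
    intro hlw i vs cs j hw hd2'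
    have hLne : (⟨(d : ℕ) - 1, by omega⟩ : Fin (2*m+1+1)) ≠ d :=
      Fin.ne_of_val_ne (by show (d : ℕ) - 1 ≠ (d : ℕ); omega)
    have eu : PEdge n m φ (p ⟨(d : ℕ) - 1, by omega⟩) (p d) :=
      path_edge hp _ d (by show (d : ℕ) = (d : ℕ) - 1 + 1; omega)
    have ew : PEdge n m φ (q ⟨(d : ℕ) - 1, by omega⟩) (q d) :=
      path_edge hq _ d (by show (d : ℕ) = (d : ℕ) - 1 + 1; omega)
    rw [← hag _ hLne] at ew
    have hL_ne_s : p ⟨(d : ℕ) - 1, by omega⟩ ≠ PVert.s :=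
      path_ne_s hp (by show 1 ≤ (d : ℕ) - 1; omega)
    have ELu := edge_level eu hL_ne_s hu_ne_t
    have ELw := edge_level ew hL_ne_s hw_ne_t
    have hlvlw : (q d).level = (i : ℕ) + 1 := by rw [hw]; rfl
    have hlxL : (p ⟨(d : ℕ) - 1, by omega⟩).level = (i : ℕ) + 1 := by
      rcases ELu with h' | h' <;> rcases ELw with h'' | h'' <;> omega
    obtain ⟨i₄, vs₄, cs₄, j₄, hxL, hi₄, -⟩ :=
      isV_of_level hp (d := ⟨(d : ℕ) - 1, by omega⟩)
        (by show 1 ≤ (d : ℕ) - 1; omega) (by show (d : ℕ) - 1 ≤ 2*m; omega)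
        (by omega) (by have := i.isLt; omega)
    have hvs₄ : vs₄ = vs := edge_vv_vs ew hxL hw (by omega)
    have hi₄' : i₄ = i := Fin.ext (by omega)
    exact ⟨cs₄, j₄, by rw [hxL, hi₄', hvs₄]⟩
  rcases Nat.even_or_odd (d : ℕ) with hev | hod
  · -- even depth: use the left neighbour
    have hev' : (d : ℕ) % 2 = 0 := Nat.even_iff.mp hev
    have hd2' : 2 ≤ (d : ℕ) := by omega
    have hLne : (⟨(d : ℕ) - 1, by omega⟩ : Fin (2*m+1+1)) ≠ d :=
      Fin.ne_of_val_ne (by show (d : ℕ) - 1 ≠ (d : ℕ); omega)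
    have eu : PEdge n m φ (p ⟨(d : ℕ) - 1, by omega⟩) (p d) :=
      path_edge hp _ d (by show (d : ℕ) = (d : ℕ) - 1 + 1; omega)
    have ew : PEdge n m φ (q ⟨(d : ℕ) - 1, by omega⟩) (q d) :=
      path_edge hq _ d (by show (d : ℕ) = (d : ℕ) - 1 + 1; omega)
    rw [← hag _ hLne] at ew
    have hL_ne_s : p ⟨(d : ℕ) - 1, by omega⟩ ≠ PVert.s :=
      path_ne_s hp (by show 1 ≤ (d : ℕ) - 1; omega)
    have hLodd : (p ⟨(d : ℕ) - 1, by omega⟩).depth % 2 = 1 := by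
      rw [path_depth hp]; show ((d : ℕ) - 1) % 2 = 1; omega
    have ELu := edge_level eu hL_ne_s hu_ne_t
    have ELw := edge_level ew hL_ne_s hw_ne_t
    have E3u := edge_odd_cs eu hLodd hL_ne_s hu_ne_t
    have E3w := edge_odd_cs ew hLodd hL_ne_s hw_ne_t
    have raise_cs : (q d).level = (p d).level + 1 → (q d).cstate ≤ (p d).cstate := by
      intro h
      have h1 : (p ⟨(d : ℕ) - 1, by omega⟩).level = (q d).level := by
        rcases ELu with h' | h' <;> rcases ELw with h'' | h'' <;> omega
      have h2 := E3u.2 (by omega)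
      have h3 := E3w.1 h1
      omega
    constructor
    · rcases ELw with h | h
      · rcases ELu with h' | h'
        · unfold thv; omega
        · have := raise_cs (by omega); unfold thv; omega
      · unfold thv; omega
    · intro heq
      have window : (q d).level = (p d).level ∨ (q d).level = (p d).level + 1 ∨
          (q d).level + 1 = (p d).level := by
        rcases ELu with h | h <;> rcases ELw with h' | h' <;> omega
      rcases window with hwin | hwin | hwin
      · -- c-state flip
        right
        refine ⟨hwin, ?_⟩
        intro i vs cs j hu
        have hcsu0 : (p d).cstate = 0 ∧ (q d).cstate = 1 := by unfold thv at heq; omega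
        have hlu : (p d).level = (i : ℕ) + 1 := by rw [hu]; rfl
        have hju : (j : ℕ) + 1 = (d : ℕ) := by
          have := hdepth_u; rw [hu] at this; exact this
        obtain ⟨i₅, vs₅, cs₅, j₅, hw, hi₅, hj₅⟩ :=
          isV_of_level hq hd1 hd2 (by omega) (by have := i.isLt; omega)
        have hi₅' : i₅ = i := Fin.ext (by omega)
        have hj₅' : j₅ = j := Fin.ext (by omega)
        have hcs₅ : cs₅ = true := by
          have : (q d).cstate = 1 := hcsu0.2
          rw [hw] at this
          cases cs₅
          · simp [PVert.cstate] at this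
          · rfl
        have hvs₅ : vs₅ = vs := by
          rcases ELu with hL | hL
          · -- left neighbour at the same level: v-state is pinned
            obtain ⟨i₆, vs₆, cs₆, j₆, hxL, hi₆, -⟩ :=
              isV_of_level hp (d := ⟨(d : ℕ) - 1, by omega⟩)
                (by show 1 ≤ (d : ℕ) - 1; omega) (by show (d : ℕ) - 1 ≤ 2*m; omega)
                (by omega) (by have := i.isLt; omega)
            have e1 : vs₆ = vs := edge_vv_vs eu hxL hu (by omega)
            have e2 : vs₆ = vs₅ := edge_vv_vs ew hxL hw (by omega)
            rw [← e1, e2]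
          · -- left neighbour one level higher: the c-state could not have flipped
            exfalso
            have h2 := E3u.2 (by omega)
            have h3 := E3w.2 (by omega)
            omega
        rw [hw, hi₅', hvs₅, hcs₅, hj₅']
      · exact Or.inl ⟨hwin, inh hwin⟩
      · exfalso; unfold thv at heq; omega
  · -- odd depth: use the right neighbour
    have hod' : (d : ℕ) % 2 = 1 := Nat.odd_iff.mp hod
    have hdR : (d : ℕ) + 1 ≤ 2*m := by omega
    have hRne : (⟨(d : ℕ) + 1, by omega⟩ : Fin (2*m+1+1)) ≠ d :=
      Fin.ne_of_val_ne (by show (d : ℕ) + 1 ≠ (d : ℕ); omega)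
    have eu : PEdge n m φ (p d) (p ⟨(d : ℕ) + 1, by omega⟩) :=
      path_edge hp d _ (by show (d : ℕ) + 1 = (d : ℕ) + 1; rfl)
    have ew : PEdge n m φ (q d) (q ⟨(d : ℕ) + 1, by omega⟩) :=
      path_edge hq d _ (by show (d : ℕ) + 1 = (d : ℕ) + 1; rfl)
    rw [← hag _ hRne] at ew
    have hR_ne_t : p ⟨(d : ℕ) + 1, by omega⟩ ≠ PVert.t :=
      path_ne_t hp (by show (d : ℕ) + 1 ≤ 2*m; omega)
    have hu_odd : (p d).depth % 2 = 1 := by rw [hdepth_u]; exact hod'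
    have hw_odd : (q d).depth % 2 = 1 := by rw [hdepth_w]; exact hod'
    have ELu := edge_level eu hu_ne_s hR_ne_t
    have ELw := edge_level ew hw_ne_s hR_ne_t
    have E3u := edge_odd_cs eu hu_odd hu_ne_s hR_ne_t
    have E3w := edge_odd_cs ew hw_odd hw_ne_s hR_ne_t
    have raise_cs : (q d).level = (p d).level + 1 → (q d).cstate ≤ (p d).cstate := by
      intro h
      have h1 : (p ⟨(d : ℕ) + 1, by omega⟩).level = (p d).level := by
        rcases ELu with h' | h' <;> rcases ELw with h'' | h'' <;> omega
      have h2 := E3u.1 h1.symm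
      have h3 := E3w.2 (by omega)
      omega
    constructor
    · rcases ELw with h | h
      · rcases ELu with h' | h'
        · unfold thv; omega
        · unfold thv; omega
      · rcases ELu with h' | h'
        · have := raise_cs (by omega); unfold thv; omega
        · unfold thv; omega
    · intro heq
      have window : (q d).level = (p d).level ∨ (q d).level = (p d).level + 1 ∨
          (q d).level + 1 = (p d).level := by
        rcases ELu with h | h <;> rcases ELw with h' | h' <;> omega
      rcases window with hwin | hwin | hwin
      · right
        refine ⟨hwin, ?_⟩
        intro i vs cs j hu
        have hcsu0 : (p d).cstate = 0 ∧ (q d).cstate = 1 := by unfold thv at heq; omega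
        have hlu : (p d).level = (i : ℕ) + 1 := by rw [hu]; rfl
        have hju : (j : ℕ) + 1 = (d : ℕ) := by
          have := hdepth_u; rw [hu] at this; exact this
        obtain ⟨i₅, vs₅, cs₅, j₅, hw, hi₅, hj₅⟩ :=
          isV_of_level hq hd1 hd2 (by omega) (by have := i.isLt; omega)
        have hi₅' : i₅ = i := Fin.ext (by omega)
        have hj₅' : j₅ = j := Fin.ext (by omega)
        have hcs₅ : cs₅ = true := by
          have : (q d).cstate = 1 := hcsu0.2
          rw [hw] at this
          cases cs₅
          · simp [PVert.cstate] at this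
          · rfl
        have hvs₅ : vs₅ = vs := by
          rcases ELu with hL | hL
          · -- right neighbour at the same level: v-state is pinned
            obtain ⟨i₆, vs₆, cs₆, j₆, hxR, hi₆, -⟩ :=
              isV_of_level hp (d := ⟨(d : ℕ) + 1, by omega⟩)
                (by show 1 ≤ (d : ℕ) + 1; omega) (by show (d : ℕ) + 1 ≤ 2*m; omega)
                (by omega) (by have := i.isLt; omega)
            have e1 : vs = vs₆ := edge_vv_vs eu hu hxR (by omega)
            have e2 : vs₅ = vs₆ := edge_vv_vs ew hw hxR (by omega)
            rw [e2, ← e1]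
          · -- right neighbour one level lower: the c-state could not have flipped
            exfalso
            have h2 := E3u.2 (by omega)
            have h3 := E3w.2 (by omega)
            omega
        rw [hw, hi₅', hvs₅, hcs₅, hj₅']
      · exact Or.inl ⟨hwin, inh hwin⟩
      · exfalso; unfold thv at heq; omega

end Stmt5Aux2
section Stmt5Aux3

variable {n m : ℕ} {φ : Fin m → Finset (Fin n × Bool)}

/-- The potential of a path: sum of the per-vertex potentials. -/
def theta {n m : ℕ} (p : Fin (2*m+1+1) → PVert n m) : ℕ := ∑ d, thv (p d)

lemma theta_pb : theta (pbP n m) = 0 := by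
  apply Finset.sum_eq_zero
  intro d _
  show thv (pbP n m d) = 0
  unfold pbP thv
  split_ifs <;> rfl

lemma sum_aux (n m : ℕ) : (∑ k ∈ Finset.range (2*m+1+1),
    (if k = 0 then 0 else if k ≤ 2*m then n+2 else 0)) = 2*m*(n+2) := by
  rw [Finset.sum_range_succ, Finset.sum_range_succ']
  have h1 : ∀ i ∈ Finset.range (2*m),
      (if i+1 = 0 then 0 else (if i+1 ≤ 2*m then n+2 else 0)) = n+2 := by
    intro i hi
    rw [Finset.mem_range] at hi
    rw [if_neg (by omega), if_pos (by omega)]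
  rw [Finset.sum_congr rfl h1, Finset.sum_const, Finset.card_range]
  have h2 : (if (0:ℕ) = 0 then 0 else if (0:ℕ) ≤ 2*m then n+2 else 0) = 0 := by simp
  have h3 : (if 2*m+1 = 0 then 0 else if 2*m+1 ≤ 2*m then n+2 else 0) = 0 := by
    split_ifs <;> omega
  rw [h2, h3, smul_eq_mul]
  omega

lemma theta_pe : theta (peP n m) = 2 * m * (n + 2) := by
  have h1 : theta (peP n m) =
      ∑ k ∈ Finset.range (2*m+1+1), (if k = 0 then 0 else if k ≤ 2*m then n+2 else 0) := by
    rw [theta, ← Fin.sum_univ_eq_sum_range]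
    apply Finset.sum_congr rfl
    intro d _
    show thv (peP n m d) = _
    unfold peP thv
    split_ifs <;> rfl
  rw [h1, sum_aux]

lemma theta_diff {p q : Fin (2*m+1+1) → PVert n m} (d : Fin (2*m+1+1))
    (hag : ∀ e, e ≠ d → p e = q e) :
    theta q + thv (p d) = theta p + thv (q d) := by
  unfold theta
  rw [← Finset.sum_erase_add _ _ (Finset.mem_univ d),
    ← Finset.sum_erase_add _ _ (Finset.mem_univ d)]
  have h : (∑ e ∈ Finset.univ.erase d, thv (q e)) = ∑ e ∈ Finset.univ.erase d, thv (p e) :=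
    Finset.sum_congr rfl (fun e he => by rw [hag e (Finset.ne_of_mem_erase he)])
  omega

lemma diff_pos_bounds {p q : Fin (2*m+1+1) → PVert n m} (hp : IsStPath n m φ p)
    (hq : IsStPath n m φ q) {d : Fin (2*m+1+1)} (hne : p d ≠ q d) :
    1 ≤ (d:ℕ) ∧ (d:ℕ) ≤ 2*m := by
  constructor
  · by_contra h
    have hd0 : d = 0 := by
      apply Fin.ext
      simp only [Fin.val_zero]
      omega
    rw [hd0, hp.1, hq.1] at hne
    exact hne rfl
  · by_contra h
    have hdl : d = Fin.last (2*m+1) := by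
      apply Fin.ext
      simp only [Fin.val_last]
      have := d.isLt
      omega
    rw [hdl, hp.2.1, hq.2.1] at hne
    exact hne rfl

variable {ρ : ℕ → (Fin (2*m+1+1) → PVert n m)}

lemma theta_exact (h0 : ρ 0 = pbP n m) (hT : ρ (2*m*(n+2)) = peP n m)
    (hpath : ∀ t ≤ 2*m*(n+2), IsStPath n m φ (ρ t))
    (hdiff : ∀ t < 2*m*(n+2), DiffOne (ρ t) (ρ (t+1))) :
    ∀ t ≤ 2*m*(n+2), theta (ρ t) = t := by
  have hstep : ∀ t < 2*m*(n+2), theta (ρ (t+1)) ≤ theta (ρ t) + 1 := by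
    intro t ht
    obtain ⟨d, hne, hag⟩ := hdiff t ht
    have hp := hpath t (by omega)
    have hq := hpath (t+1) (by omega)
    obtain ⟨hd1, hd2⟩ := diff_pos_bounds hp hq hne
    have hb := (step_main hp hq d hd1 hd2 hag).1
    have hs := theta_diff d hag
    omega
  have hup : ∀ t ≤ 2*m*(n+2), theta (ρ t) ≤ t := by
    intro t
    induction t with
    | zero => intro _; rw [h0, theta_pb]
    | succ t ih =>
      intro ht
      have h1 := hstep t (by omega)
      have h2 := ih (by omega)
      omega
  have hdown : ∀ k t, t + k = 2*m*(n+2) → 2*m*(n+2) ≤ theta (ρ t) + k := by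
    intro k
    induction k with
    | zero =>
      intro t htk
      have h : t = 2*m*(n+2) := by omega
      subst h
      rw [hT, theta_pe]
      omega
    | succ k ih =>
      intro t htk
      have h1 := ih (t+1) (by omega)
      have h2 := hstep t (by omega)
      omega
  intro t ht
  have h1 := hup t ht
  have h2 := hdown (2*m*(n+2) - t) t (by omega)
  omega

lemma evolve (h0 : ρ 0 = pbP n m) (hT : ρ (2*m*(n+2)) = peP n m)
    (hpath : ∀ t ≤ 2*m*(n+2), IsStPath n m φ (ρ t))
    (hdiff : ∀ t < 2*m*(n+2), DiffOne (ρ t) (ρ (t+1)))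
    (t : ℕ) (ht : t < 2*m*(n+2)) (d : Fin (2*m+1+1))
    (hd1 : 1 ≤ (d:ℕ)) (hd2 : (d:ℕ) ≤ 2*m) :
    ρ (t+1) d = ρ t d ∨
    ((ρ (t+1) d).level = (ρ t d).level + 1 ∧
      ∀ (i : Fin n) (vs cs : Bool) (j : Fin (2*m)), ρ (t+1) d = PVert.v i vs cs j →
        2 ≤ (d:ℕ) →
        ∃ cs₂ j₂, ρ t ⟨(d:ℕ) - 1, by omega⟩ = PVert.v i vs cs₂ j₂) ∨
    ((ρ (t+1) d).level = (ρ t d).level ∧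
      ∀ (i : Fin n) (vs cs : Bool) (j : Fin (2*m)), ρ t d = PVert.v i vs cs j →
        ρ (t+1) d = PVert.v i vs true j) := by
  by_cases hdd : ρ (t+1) d = ρ t d
  · exact Or.inl hdd
  · obtain ⟨d', hne, hag⟩ := hdiff t ht
    have hd' : d = d' := by
      by_contra h
      exact hdd (hag d h).symm
    subst hd'
    have hp := hpath t (by omega)
    have hq := hpath (t+1) (by omega)
    have hth_t := theta_exact h0 hT hpath hdiff t (by omega)
    have hth_t1 := theta_exact h0 hT hpath hdiff (t+1) (by omega)
    have hsum := theta_diff d hag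
    have hthv : thv (ρ (t+1) d) = thv (ρ t d) + 1 := by omega
    rcases (step_main hp hq d hd1 hd2 hag).2 hthv with ⟨hA, hB⟩ | ⟨hA, hB⟩
    · exact Or.inr (Or.inl ⟨hA, hB⟩)
    · exact Or.inr (Or.inr ⟨hA, hB⟩)

lemma level_step (h0 : ρ 0 = pbP n m) (hT : ρ (2*m*(n+2)) = peP n m)
    (hpath : ∀ t ≤ 2*m*(n+2), IsStPath n m φ (ρ t))
    (hdiff : ∀ t < 2*m*(n+2), DiffOne (ρ t) (ρ (t+1)))
    (t : ℕ) (ht : t < 2*m*(n+2)) (d : Fin (2*m+1+1))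
    (hd1 : 1 ≤ (d:ℕ)) (hd2 : (d:ℕ) ≤ 2*m) :
    (ρ t d).level ≤ (ρ (t+1) d).level ∧ (ρ (t+1) d).level ≤ (ρ t d).level + 1 := by
  rcases evolve h0 hT hpath hdiff t ht d hd1 hd2 with he | ⟨h, -⟩ | ⟨h, -⟩
  · rw [he]; omega
  · omega
  · omega

lemma level_mono (h0 : ρ 0 = pbP n m) (hT : ρ (2*m*(n+2)) = peP n m)
    (hpath : ∀ t ≤ 2*m*(n+2), IsStPath n m φ (ρ t))
    (hdiff : ∀ t < 2*m*(n+2), DiffOne (ρ t) (ρ (t+1)))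
    {d : Fin (2*m+1+1)} (hd1 : 1 ≤ (d:ℕ)) (hd2 : (d:ℕ) ≤ 2*m)
    {s t : ℕ} (hst : s ≤ t) (ht : t ≤ 2*m*(n+2)) :
    (ρ s d).level ≤ (ρ t d).level := by
  have H : ∀ k, s + k ≤ 2*m*(n+2) → (ρ s d).level ≤ (ρ (s+k) d).level := by
    intro k
    induction k with
    | zero => intro _; exact le_refl _
    | succ k ih =>
      intro hk
      have h1 := ih (by omega)
      have h2 := (level_step h0 hT hpath hdiff (s+k) (by omega) d hd1 hd2).1
      have h3 : s + (k+1) = (s+k) + 1 := by omega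
      rw [h3]
      omega
  have h4 := H (t - s) (by omega)
  have h5 : s + (t - s) = t := by omega
  rw [h5] at h4
  exact h4

lemma vs_inv (h0 : ρ 0 = pbP n m) (hT : ρ (2*m*(n+2)) = peP n m)
    (hpath : ∀ t ≤ 2*m*(n+2), IsStPath n m φ (ρ t))
    (hdiff : ∀ t < 2*m*(n+2), DiffOne (ρ t) (ρ (t+1)))
    {d : Fin (2*m+1+1)} (hd1 : 1 ≤ (d:ℕ)) (hd2 : (d:ℕ) ≤ 2*m)
    {s t : ℕ} (hst : s ≤ t) (ht : t ≤ 2*m*(n+2))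
    {i : Fin n} {vs cs : Bool} {j : Fin (2*m)}
    (hv : ρ s d = PVert.v i vs cs j) (hlv : (ρ t d).level = (i:ℕ) + 1) :
    ∃ cs' j', ρ t d = PVert.v i vs cs' j' := by
  revert ht hlv
  induction t, hst using Nat.le_induction with
  | base => intro _ _; exact ⟨cs, j, hv⟩
  | succ t hst ih =>
    intro ht1 hlv1
    have ht' : t ≤ 2*m*(n+2) := by omega
    have hlvs : (ρ s d).level = (i:ℕ) + 1 := by rw [hv]; rfl
    have hmono := level_mono h0 hT hpath hdiff hd1 hd2 hst ht'
    have hstep := (level_step h0 hT hpath hdiff t (by omega) d hd1 hd2).1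
    have hlv_t : (ρ t d).level = (i:ℕ) + 1 := by omega
    obtain ⟨cs', j', hvt⟩ := ih ht' hlv_t
    rcases evolve h0 hT hpath hdiff t (by omega) d hd1 hd2 with he | ⟨hB1, -⟩ | ⟨-, hB2⟩
    · exact ⟨cs', j', by rw [he, hvt]⟩
    · exfalso; omega
    · exact ⟨true, j', hB2 i vs cs' j' hvt⟩

lemma ivt (f : ℕ → ℕ) : ∀ t, (∀ s, s < t → f (s+1) ≤ f s + 1) →
    ∀ k, f 0 ≤ k → k < f t → ∃ s, s < t ∧ f s = k ∧ f (s+1) = k + 1 := by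
  intro t
  induction t with
  | zero => intro _ k h1 h2; omega
  | succ t ih =>
    intro hstep k h1 h2
    by_cases hk : k < f t
    · obtain ⟨s, hs, h⟩ := ih (fun s hs => hstep s (by omega)) k h1 hk
      exact ⟨s, by omega, h⟩
    · have h3 := hstep t (by omega)
      exact ⟨t, by omega, by omega, by omega⟩

end Stmt5Aux3
/-- if `ρ` is a reconfiguration sequence of length `2m(n+2)` from `p_b` to
`p_e` in `G_φ`, then for every level `i ∈ {1, …, n}` some path in `ρ` contains a gadget
vertex of level `i`, and all gadget vertices of level `i` contained in paths of `ρ` have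
the same v-state. -/
theorem stmt5 (n m : ℕ) (hn : 1 ≤ n) (hm : 1 ≤ m) (φ : Fin m → Finset (Fin n × Bool))
    (ρ : ℕ → (Fin (2 * m + 1 + 1) → PVert n m))
    (hρ : PReconfSeq n m φ ρ (2 * m * (n + 2)) (pbP n m) (peP n m)) :
    ∀ i : Fin n,
      (∃ step ≤ 2 * m * (n + 2), ∃ (pos : Fin (2 * m + 1 + 1)) (vs cs : Bool)
          (j : Fin (2 * m)), ρ step pos = PVert.v i vs cs j) ∧
      (∀ step ≤ 2 * m * (n + 2), ∀ step' ≤ 2 * m * (n + 2),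
        ∀ (pos pos' : Fin (2 * m + 1 + 1)) (vs cs vs' cs' : Bool) (j j' : Fin (2 * m)),
          ρ step pos = PVert.v i vs cs j → ρ step' pos' = PVert.v i vs' cs' j' →
            vs = vs') := by
  obtain ⟨h0, hT, hpath, hdiff⟩ := hρ
  intro i
  -- levels at time 0 and at time 2m(n+2)
  have hlv0 : ∀ d : Fin (2*m+1+1), (ρ 0 d).level = 0 := by
    intro d
    rw [h0]
    show (pbP n m d).level = 0
    unfold pbP
    split_ifs <;> rfl
  have hlvT : ∀ d : Fin (2*m+1+1), 1 ≤ (d:ℕ) → (d:ℕ) ≤ 2*m →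
      (ρ (2*m*(n+2)) d).level = n+1 := by
    intro d h1 h2
    rw [hT]
    show (peP n m d).level = n+1
    unfold peP
    split_ifs with ha hb
    · exact absurd ha (by omega)
    · rfl
  -- the distinguished position of depth 1
  obtain ⟨pos1, hpos1v⟩ : ∃ e : Fin (2*m+1+1), (e:ℕ) = 1 := ⟨⟨1, by omega⟩, rfl⟩
  have hp11 : 1 ≤ (pos1:ℕ) := by omega
  have hp12 : (pos1:ℕ) ≤ 2*m := by omega
  -- Claim 1: position 1 reaches level i+1 at some time
  have hstep1 : ∀ s, s < 2*m*(n+2) → (ρ (s+1) pos1).level ≤ (ρ s pos1).level + 1 :=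
    fun s hs => (level_step h0 hT hpath hdiff s hs pos1 hp11 hp12).2
  obtain ⟨s₁, hs₁, hfs₁, hfs₁'⟩ := ivt (fun s => (ρ s pos1).level) (2*m*(n+2)) hstep1 (i:ℕ)
    (show (ρ 0 pos1).level ≤ (i:ℕ) by rw [hlv0]; omega)
    (show (i:ℕ) < (ρ (2*m*(n+2)) pos1).level by
      rw [hlvT pos1 hp11 hp12]; have := i.isLt; omega)
  have hfs₁'' : (ρ (s₁+1) pos1).level = (i:ℕ) + 1 := hfs₁'
  obtain ⟨i₀, vs₁, cs₁, j₁, hv₁, hi₀, -⟩ :=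
    isV_of_level (hpath (s₁+1) (by omega)) hp11 hp12
      (by omega) (by have := i.isLt; omega)
  have hi₀' : i₀ = i := Fin.ext (by omega)
  rw [hi₀'] at hv₁
  have hlv₁ : (ρ (s₁+1) pos1).level = (i:ℕ) + 1 := by rw [hv₁]; rfl
  -- Claim 2: every gadget vertex of level i+1 occurring in the sequence has v-state vs₁
  have main : ∀ (k : ℕ), ∀ t ≤ 2*m*(n+2), ∀ (d : Fin (2*m+1+1)), (d:ℕ) = k →
      ∀ (vs cs : Bool) (j : Fin (2*m)), ρ t d = PVert.v i vs cs j → vs = vs₁ := by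
    intro k
    induction k using Nat.strong_induction_on with
    | _ k ih =>
      intro t ht d hdk vs cs j hv
      have hdep : (ρ t d).depth = (d:ℕ) := path_depth (hpath t ht) d
      rw [hv] at hdep
      have hjd : (j:ℕ) + 1 = (d:ℕ) := hdep
      have hd1 : 1 ≤ (d:ℕ) := by omega
      have hd2 : (d:ℕ) ≤ 2*m := by have := j.isLt; omega
      have hlv : (ρ t d).level = (i:ℕ) + 1 := by rw [hv]; rfl
      by_cases hdv1 : (d:ℕ) = 1
      · -- base position: compare with the witness at pos1
        have hdp : d = pos1 := Fin.ext (by omega)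
        rw [hdp] at hv hlv
        rcases le_total t (s₁+1) with hle | hle
        · obtain ⟨cs', j', h⟩ := vs_inv h0 hT hpath hdiff hp11 hp12 hle (by omega) hv hlv₁
          rw [hv₁] at h
          simp only [PVert.v.injEq] at h
          exact h.2.1.symm
        · obtain ⟨cs', j', h⟩ := vs_inv h0 hT hpath hdiff hp11 hp12 hle ht hv₁ hlv
          rw [hv] at h
          simp only [PVert.v.injEq] at h
          exact h.2.1
      · -- inductive position: find the raise step and inherit from the left
        have hd2' : 2 ≤ (d:ℕ) := by omega
        have hstepd : ∀ s, s < t → (ρ (s+1) d).level ≤ (ρ s d).level + 1 :=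
          fun s hs => (level_step h0 hT hpath hdiff s (by omega) d hd1 hd2).2
        obtain ⟨s, hst, hfs, hfs'⟩ := ivt (fun s => (ρ s d).level) t hstepd (i:ℕ)
          (show (ρ 0 d).level ≤ (i:ℕ) by rw [hlv0]; omega)
          (show (i:ℕ) < (ρ t d).level by omega)
        have hfsA : (ρ s d).level = (i:ℕ) := hfs
        have hfsB : (ρ (s+1) d).level = (i:ℕ) + 1 := hfs'
        obtain ⟨i₀', vs₀, cs₀, j₀, hv₀, hi₀₂, -⟩ :=
          isV_of_level (hpath (s+1) (by omega)) hd1 hd2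
            (by omega) (by have := i.isLt; omega)
        have hieq : i₀' = i := Fin.ext (by omega)
        rw [hieq] at hv₀
        rcases evolve h0 hT hpath hdiff s (by omega) d hd1 hd2 with he | ⟨hB1a, hB1⟩ | ⟨hB2a, -⟩
        · rw [he] at hfsB; omega
        · obtain ⟨cs₂, j₂, hinh⟩ := hB1 i vs₀ cs₀ j₀ hv₀ hd2'
          have hvs₀ : vs₀ = vs₁ :=
            ih ((d:ℕ)-1) (by omega) s (by omega) _ rfl vs₀ cs₂ j₂ hinh
          obtain ⟨cs', j', hvt⟩ := vs_inv h0 hT hpath hdiff hd1 hd2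
            (show s+1 ≤ t by omega) ht hv₀ hlv
          rw [hv] at hvt
          simp only [PVert.v.injEq] at hvt
          rw [hvt.2.1]
          exact hvs₀
        · omega
  constructor
  · exact ⟨s₁+1, by omega, pos1, vs₁, cs₁, j₁, hv₁⟩
  · intro step hstep step' hstep' pos pos' vs cs vs' cs' j j' h h'
    have e1 := main (pos:ℕ) step hstep pos rfl vs cs j h
    have e2 := main (pos':ℕ) step' hstep' pos' rfl vs' cs' j' h'
    rw [e1, e2]
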